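/- arXiv:1410.5023 — 3 statements merged into one kernel-verified Lean document; each statement's English description precedes it below -/
import Mathlib

section
/- In NSym, for n ≥ 1 and k ≥ 0, the antipode of the hook immaculate function satisfies S(𝒮_{(n,1^k)}) = (-1)^{n+k} 𝒮_{(k+1,1^{n-1})}, where (n,1^k) denotes the composition with first part n followed by k parts equal to 1. -/
open TensorProduct

/-- The immaculate function `𝒮_α` for a composition `α` (as a list), defined as
the noncommutative determinant `Det(H_{α_i + j - i})` with factors in row
order, where `H_m = 0` for `m < 0`. -/
noncomputable def immaculate {N : Type} [Ring N] (Hh : ℕ → N) (α : List ℕ) : N :=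
  ∑ σ : Equiv.Perm (Fin α.length), ((Equiv.Perm.sign σ : ℤˣ) : ℤ) •
    ((List.finRange α.length).map (fun (i : Fin α.length) =>
      if (i : ℕ) ≤ α.get i + (σ i : ℕ) then Hh (α.get i + (σ i : ℕ) - (i : ℕ))
      else 0)).prod

namespace NSymAux
variable {N : Type} [Ring N]

noncomputable def imm' (Hh : ℕ → N) (m : ℕ) (a : ℕ → ℕ) : N :=
  ∑ σ : Equiv.Perm (Fin m), ((Equiv.Perm.sign σ : ℤˣ) : ℤ) •
    ((List.finRange m).map (fun (i : Fin m) =>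
      if (i : ℕ) ≤ a i + (σ i : ℕ) then Hh (a i + (σ i : ℕ) - (i : ℕ))
      else 0)).prod

noncomputable def Ee (Hh : ℕ → N) : ℕ → N
  | 0 => 1
  | (m+1) => - ∑ i : Fin (m+1), Hh (m+1 - (i:ℕ)) * Ee Hh i

lemma Ee_zero (Hh : ℕ → N) : Ee Hh 0 = 1 := by rw [Ee]

lemma Ee_succ (Hh : ℕ → N) (m : ℕ) :
    Ee Hh (m+1) = - ∑ i ∈ Finset.range (m+1), Hh (m+1-i) * Ee Hh i := by
  rw [Ee, ← Fin.sum_univ_eq_sum_range]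

noncomputable def Ff (Hh : ℕ → N) : ℕ → N
  | 0 => 1
  | (m+1) => - ∑ i : Fin (m+1), Ff Hh i * Hh (m+1 - (i:ℕ))

lemma Ff_zero (Hh : ℕ → N) : Ff Hh 0 = 1 := by rw [Ff]

lemma Ff_succ (Hh : ℕ → N) (m : ℕ) :
    Ff Hh (m+1) = - ∑ i ∈ Finset.range (m+1), Ff Hh i * Hh (m+1-i) := by
  rw [Ff, ← Fin.sum_univ_eq_sum_range]

variable (Hh : ℕ → N) (h0 : Hh 0 = 1)

include h0 in
lemma sum_Hh_Ee (m : ℕ) :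
    ∑ c ∈ Finset.range (m+1), Hh c * Ee Hh (m - c) = if m = 0 then 1 else 0 := by
  cases m with
  | zero => simp [Ee_zero, h0]
  | succ m =>
    rw [Finset.sum_range_succ' (fun c => Hh c * Ee Hh (m + 1 - c)) (m+1)]
    have h1 : ∑ i ∈ Finset.range (m+1), Hh (i+1) * Ee Hh (m+1-(i+1))
        = - Ee Hh (m+1) := by
      rw [Ee_succ, neg_neg]
      rw [← Finset.sum_range_reflect]
      apply Finset.sum_congr rfl
      intro i hi
      simp only [Finset.mem_range] at hi
      congr 2 <;> omega
    simp only [h1]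
    simp [h0, if_neg (Nat.succ_ne_zero m)]

include h0 in
lemma sum_Ff_Hh (m : ℕ) :
    ∑ c ∈ Finset.range (m+1), Ff Hh c * Hh (m - c) = if m = 0 then 1 else 0 := by
  cases m with
  | zero => simp [Ff_zero, h0]
  | succ m =>
    rw [Finset.sum_range_succ (fun c => Ff Hh c * Hh (m + 1 - c)) (m+1)]
    have h1 : ∑ i ∈ Finset.range (m+1), Ff Hh i * Hh (m+1-i) = - Ff Hh (m+1) := by
      rw [Ff_succ, neg_neg]
    simp only [h1]
    simp [h0, if_neg (Nat.succ_ne_zero m)]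

-- power series versions
noncomputable def hS : PowerSeries N := PowerSeries.mk Hh
noncomputable def eS : PowerSeries N := PowerSeries.mk (Ee Hh)
noncomputable def fS : PowerSeries N := PowerSeries.mk (Ff Hh)

include h0 in
lemma hS_mul_eS : hS Hh * eS Hh = 1 := by
  ext m
  rw [PowerSeries.coeff_mul, Finset.Nat.sum_antidiagonal_eq_sum_range_succ_mk]
  simp only [hS, eS, PowerSeries.coeff_mk]
  rw [sum_Hh_Ee Hh h0 m, PowerSeries.coeff_one]

include h0 in
lemma fS_mul_hS : fS Hh * hS Hh = 1 := by
  ext m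
  rw [PowerSeries.coeff_mul, Finset.Nat.sum_antidiagonal_eq_sum_range_succ_mk]
  simp only [hS, fS, PowerSeries.coeff_mk]
  rw [sum_Ff_Hh Hh h0 m, PowerSeries.coeff_one]

include h0 in
lemma fS_eq_eS : fS Hh = eS Hh := by
  calc fS Hh = fS Hh * (hS Hh * eS Hh) := by rw [hS_mul_eS Hh h0, mul_one]
  _ = (fS Hh * hS Hh) * eS Hh := by rw [mul_assoc]
  _ = eS Hh := by rw [fS_mul_hS Hh h0, one_mul]

include h0 in
lemma eS_mul_hS : eS Hh * hS Hh = 1 := by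
  rw [← fS_eq_eS Hh h0, fS_mul_hS Hh h0]

include h0 in
lemma sum_Ee_Hh (m : ℕ) :
    ∑ c ∈ Finset.range (m+1), Ee Hh c * Hh (m - c) = if m = 0 then 1 else 0 := by
  have := congrArg (PowerSeries.coeff (R := N) m) (eS_mul_hS Hh h0)
  rw [PowerSeries.coeff_mul, Finset.Nat.sum_antidiagonal_eq_sum_range_succ_mk,
    PowerSeries.coeff_one] at this
  simpa [eS, hS] using this

variable {K : Type} [Field K] [HopfAlgebra K N]
  (hcomul : ∀ m : ℕ, Coalgebra.comul (R := K) (Hh m) =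
      ∑ i ∈ Finset.range (m + 1), Hh i ⊗ₜ[K] Hh (m - i))
  (hcounit : ∀ m : ℕ,
      Coalgebra.counit (R := K) (Hh m) = if m = 0 then (1 : K) else 0)

include h0 hcounit in
lemma counit_Ee (m : ℕ) :
    Coalgebra.counit (R := K) (Ee Hh m) = if m = 0 then (1 : K) else 0 := by
  classical
  have hmap : PowerSeries.map (Bialgebra.counitAlgHom K N).toRingHom (hS Hh) = 1 := by
    ext j
    simp [hS, PowerSeries.coeff_map, Bialgebra.counitAlgHom_apply, hcounit j,
      PowerSeries.coeff_one]
  have : PowerSeries.map (Bialgebra.counitAlgHom K N).toRingHom (eS Hh) = 1 := by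
    calc PowerSeries.map (Bialgebra.counitAlgHom K N).toRingHom (eS Hh)
        = PowerSeries.map (Bialgebra.counitAlgHom K N).toRingHom (hS Hh * eS Hh) := by
          rw [map_mul, hmap, one_mul]
      _ = 1 := by rw [hS_mul_eS Hh h0, map_one]
  have := congrArg (PowerSeries.coeff (R := K) m) this
  simpa [eS, PowerSeries.coeff_map, Bialgebra.counitAlgHom_apply,
    PowerSeries.coeff_one] using this

include h0 hcomul in
lemma comul_Ee (m : ℕ) :
    Coalgebra.comul (R := K) (Ee Hh m) =
      ∑ i ∈ Finset.range (m + 1), Ee Hh (m - i) ⊗ₜ[K] Ee Hh i := by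
  classical
  set C := PowerSeries.map (Bialgebra.comulAlgHom K N).toRingHom with hC
  set L := PowerSeries.map (Algebra.TensorProduct.includeLeft (R := K) (S := K)
      (A := N) (B := N)).toRingHom with hL
  set R := PowerSeries.map (Algebra.TensorProduct.includeRight (R := K)
      (A := N) (B := N)).toRingHom with hR
  have hCh : C (hS Hh) = L (hS Hh) * R (hS Hh) := by
    ext j
    rw [PowerSeries.coeff_mul, Finset.Nat.sum_antidiagonal_eq_sum_range_succ_mk]
    simp only [hC, hL, hR, hS, PowerSeries.coeff_map, PowerSeries.coeff_mk,
      AlgHom.toRingHom_eq_coe, RingHom.coe_coe,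
      Bialgebra.comulAlgHom_apply, Algebra.TensorProduct.includeLeft_apply,
      Algebra.TensorProduct.includeRight_apply, hcomul j]
    apply Finset.sum_congr rfl
    intro i _
    rw [Algebra.TensorProduct.tmul_mul_tmul, one_mul, mul_one]
  have hLhe : L (hS Hh) * L (eS Hh) = 1 := by
    rw [← map_mul, hS_mul_eS Hh h0, map_one]
  have hLeh : L (eS Hh) * L (hS Hh) = 1 := by
    rw [← map_mul, eS_mul_hS Hh h0, map_one]
  have hRhe : R (hS Hh) * R (eS Hh) = 1 := by
    rw [← map_mul, hS_mul_eS Hh h0, map_one]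
  have hReh : R (eS Hh) * R (hS Hh) = 1 := by
    rw [← map_mul, eS_mul_hS Hh h0, map_one]
  have key : C (eS Hh) = R (eS Hh) * L (eS Hh) := by
    have h2 : (R (eS Hh) * L (eS Hh)) * C (hS Hh) = 1 := by
      rw [hCh, mul_assoc, ← mul_assoc (L (eS Hh)), hLeh, one_mul, hReh]
    calc C (eS Hh) = (R (eS Hh) * L (eS Hh)) * (C (hS Hh) * C (eS Hh)) := by
          rw [← mul_assoc, h2, one_mul]
      _ = (R (eS Hh) * L (eS Hh)) * C (hS Hh * eS Hh) := by rw [map_mul]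
      _ = R (eS Hh) * L (eS Hh) := by rw [hS_mul_eS Hh h0, map_one, mul_one]
  have := congrArg (PowerSeries.coeff (R := N ⊗[K] N) m) key
  rw [PowerSeries.coeff_mul, Finset.Nat.sum_antidiagonal_eq_sum_range_succ_mk] at this
  simp only [hC, hL, hR, eS, PowerSeries.coeff_map, PowerSeries.coeff_mk,
    AlgHom.toRingHom_eq_coe, RingHom.coe_coe,
    Bialgebra.comulAlgHom_apply, Algebra.TensorProduct.includeLeft_apply,
    Algebra.TensorProduct.includeRight_apply] at this
  rw [this]
  apply Finset.sum_congr rfl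
  intro i _
  rw [Algebra.TensorProduct.tmul_mul_tmul, one_mul, mul_one]

include h0 hcomul in
lemma comul_Ee' (m : ℕ) :
    Coalgebra.comul (R := K) (Ee Hh m) =
      ∑ i ∈ Finset.range (m + 1), Ee Hh i ⊗ₜ[K] Ee Hh (m - i) := by
  rw [comul_Ee Hh h0 hcomul m, ← Finset.sum_range_reflect]
  apply Finset.sum_congr rfl
  intro i hi
  simp only [Finset.mem_range] at hi
  congr 2 <;> omega

include h0 in
lemma sum_sum_G (a b : ℕ) :
    ∑ p ∈ Finset.range (a+1), ∑ q ∈ Finset.range (b+1),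
        (Hh p * Ee Hh q) * (Hh (b-q) * Ee Hh (a-p))
      = (if a = 0 then (1:N) else 0) * (if b = 0 then (1:N) else 0) := by
  have inner : ∀ p, ∑ q ∈ Finset.range (b+1),
      (Hh p * Ee Hh q) * (Hh (b-q) * Ee Hh (a-p))
      = Hh p * ((if b = 0 then (1:N) else 0) * Ee Hh (a-p)) := by
    intro p
    rw [← sum_Ee_Hh Hh h0 b, Finset.sum_mul, Finset.mul_sum]
    apply Finset.sum_congr rfl
    intro q _
    rw [mul_assoc, ← mul_assoc (Ee Hh q)]
  simp only [inner]
  by_cases hb : b = 0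
  · simp only [inner, if_pos hb, one_mul, mul_one]
    exact sum_Hh_Ee Hh h0 a
  · simp [inner, hb]

include h0 hcomul hcounit in
lemma antipode_Hh_Ee : ∀ (a b : ℕ),
    HopfAlgebra.antipode (R := K) (Hh a * Ee Hh b) = Hh b * Ee Hh a := by
  have main : ∀ c, ∀ a b, a + b = c →
      HopfAlgebra.antipode (R := K) (Hh a * Ee Hh b) = Hh b * Ee Hh a := by
    intro c
    induction c using Nat.strong_induction_on with
    | _ c IH =>
      intro a b hab
      have key := HopfAlgebra.mul_antipode_lTensor_comul_apply (R := K) (A := N)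
        (Hh a * Ee Hh b)
      have hcm : Coalgebra.comul (R := K) (Hh a * Ee Hh b)
          = ∑ p ∈ Finset.range (a+1), ∑ q ∈ Finset.range (b+1),
              (Hh p * Ee Hh q) ⊗ₜ[K] (Hh (a-p) * Ee Hh (b-q)) := by
        have hm := map_mul (Bialgebra.comulAlgHom K N) (Hh a) (Ee Hh b)
        simp only [Bialgebra.comulAlgHom_apply] at hm
        rw [hm, hcomul, comul_Ee' Hh h0 hcomul, Finset.sum_mul_sum]
        apply Finset.sum_congr rfl; intro p _
        apply Finset.sum_congr rfl; intro q _
        rw [Algebra.TensorProduct.tmul_mul_tmul]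
      have hcu : Coalgebra.counit (R := K) (Hh a * Ee Hh b)
          = (if a = 0 then (1:K) else 0) * (if b = 0 then (1:K) else 0) := by
        have hm := map_mul (Bialgebra.counitAlgHom K N) (Hh a) (Ee Hh b)
        simp only [Bialgebra.counitAlgHom_apply] at hm
        rw [hm, hcounit, counit_Ee Hh h0 hcounit]
      rw [hcm, hcu] at key
      simp only [map_sum, LinearMap.lTensor_tmul, LinearMap.mul'_apply] at key
      have halg : (algebraMap K N) ((if a = 0 then (1:K) else 0) * (if b = 0 then (1:K) else 0))
          = (if a = 0 then (1:N) else 0) * (if b = 0 then (1:N) else 0) := by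
        rw [map_mul, apply_ite (algebraMap K N), apply_ite (algebraMap K N),
          map_one, map_zero]
      rw [halg] at key
      have hG := sum_sum_G Hh h0 a b
      have hdiff : ∑ p ∈ Finset.range (a+1), ∑ q ∈ Finset.range (b+1),
          ((Hh p * Ee Hh q) * HopfAlgebra.antipode (R := K) (Hh (a-p) * Ee Hh (b-q))
            - (Hh p * Ee Hh q) * (Hh (b-q) * Ee Hh (a-p)))
          = (Hh 0 * Ee Hh 0) * HopfAlgebra.antipode (R := K) (Hh (a-0) * Ee Hh (b-0))
            - (Hh 0 * Ee Hh 0) * (Hh (b-0) * Ee Hh (a-0)) := by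
        rw [Finset.sum_eq_single_of_mem 0 (Finset.mem_range.mpr (Nat.succ_pos a))]
        · rw [Finset.sum_eq_single_of_mem 0 (Finset.mem_range.mpr (Nat.succ_pos b))]
          intro q hq hq0
          rw [IH ((a-0)+(b-q)) (by simp only [Finset.mem_range] at hq; omega)
            (a-0) (b-q) rfl, sub_self]
        · intro p hp hp0
          apply Finset.sum_eq_zero
          intro q hq
          rw [IH ((a-p)+(b-q)) (by simp only [Finset.mem_range] at hp hq; omega)
            (a-p) (b-q) rfl, sub_self]
      simp only [Finset.sum_sub_distrib] at hdiff
      rw [key, hG, sub_self] at hdiff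
      have := (eq_of_sub_eq_zero hdiff.symm)
      simpa [h0, Ee_zero] using this
  intro a b; exact main (a+b) a b rfl

variable (Hh : ℕ → N)

lemma perm_univ_zero : (Finset.univ : Finset (Equiv.Perm (Fin 0))) = {1} := by
  ext σ
  simp only [Finset.mem_univ, Finset.mem_singleton, true_iff]
  exact Equiv.ext (fun i => i.elim0)

lemma perm_univ_one : (Finset.univ : Finset (Equiv.Perm (Fin 1))) = {1} := by
  ext σ
  simp only [Finset.mem_univ, Finset.mem_singleton, true_iff]
  exact Equiv.ext (fun i => Subsingleton.elim _ _)

lemma imm'_zero (a : ℕ → ℕ) : imm' Hh 0 a = 1 := by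
  rw [imm', perm_univ_zero, Finset.sum_singleton]
  simp

lemma imm'_one (a : ℕ → ℕ) : imm' Hh 1 a = Hh (a 0) := by
  rw [imm', perm_univ_one, Finset.sum_singleton]
  simp [List.finRange_succ]

lemma ext_zero {k : ℕ} (τ : Equiv.Perm (Fin (k+1))) :
    Equiv.Perm.decomposeFin.symm (0, τ) 0 = 0 :=
  Equiv.Perm.decomposeFin_symm_apply_zero 0 τ

lemma ext_succ {k : ℕ} (τ : Equiv.Perm (Fin (k+1))) (x : Fin (k+1)) :
    Equiv.Perm.decomposeFin.symm (0, τ) x.succ = (τ x).succ := by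
  rw [Equiv.Perm.decomposeFin_symm_apply_succ, Equiv.swap_self]
  rfl

lemma ext_sign {k : ℕ} (τ : Equiv.Perm (Fin (k+1))) :
    Equiv.Perm.sign (Equiv.Perm.decomposeFin.symm (0, τ)) = Equiv.Perm.sign τ := by
  rw [Equiv.Perm.decomposeFin.symm_sign, if_pos rfl, one_mul]

lemma hE_eq {k : ℕ} (p : Fin (k+2)) (τ : Equiv.Perm (Fin (k+1))) :
    (Equiv.Perm.decomposeFin.symm (p, τ⁻¹))⁻¹
      = Equiv.Perm.decomposeFin.symm (0, τ) * Equiv.swap 0 p := by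
  have h1 : (Equiv.Perm.decomposeFin.symm (0, τ) * Equiv.swap 0 p) *
      Equiv.Perm.decomposeFin.symm (p, τ⁻¹) = 1 := by
    apply Equiv.ext
    intro x
    refine Fin.cases ?_ ?_ x
    · simp [Equiv.Perm.mul_apply, Equiv.swap_apply_right, Equiv.swap_self]
    · intro y
      simp [Equiv.Perm.mul_apply, Equiv.swap_apply_self, Equiv.swap_self, ext_succ]
  exact inv_eq_of_mul_eq_one_left h1

def colEquiv (k : ℕ) : Fin (k+2) × Equiv.Perm (Fin (k+1)) ≃ Equiv.Perm (Fin (k+2)) :=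
  ((Equiv.refl (Fin (k+2))).prodCongr (Equiv.inv (Equiv.Perm (Fin (k+1))))).trans
    (Equiv.Perm.decomposeFin.symm.trans (Equiv.inv (Equiv.Perm (Fin (k+2)))))

lemma colEquiv_apply (k : ℕ) (p : Fin (k+2)) (τ : Equiv.Perm (Fin (k+1))) :
    colEquiv k (p, τ) = Equiv.Perm.decomposeFin.symm (0, τ) * Equiv.swap 0 p := by
  rw [show colEquiv k (p, τ) = (Equiv.Perm.decomposeFin.symm (p, τ⁻¹))⁻¹ from rfl, hE_eq]


lemma lemA (h0 : Hh 0 = 1) (n k : ℕ) :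
    imm' Hh (k+2) (fun j => if j = 0 then n else 1)
      = Hh n * imm' Hh (k+1) (fun _ => 1)
        - imm' Hh (k+1) (fun j => if j = 0 then n+1 else 1) := by
  classical
  have hL : imm' Hh (k+2) (fun j => if j = 0 then n else 1)
      = ∑ pτ : Fin (k+2) × Equiv.Perm (Fin (k+1)),
          ((Equiv.Perm.sign (colEquiv k pτ) : ℤˣ) : ℤ) •
            ((List.finRange (k+2)).map (fun (i : Fin (k+2)) =>
              if (i : ℕ) ≤ (if (i : ℕ) = 0 then n else 1) + ((colEquiv k pτ) i : ℕ)
              then Hh ((if (i : ℕ) = 0 then n else 1) + ((colEquiv k pτ) i : ℕ) - (i : ℕ))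
              else 0)).prod := by
    rw [imm']
    exact (Equiv.sum_comp (colEquiv k) _).symm
  rw [hL, Fintype.sum_prod_type, Fin.sum_univ_succ, Fin.sum_univ_succ]
  have hA : ∑ τ : Equiv.Perm (Fin (k+1)),
      ((Equiv.Perm.sign (colEquiv k ((0 : Fin (k+2)), τ)) : ℤˣ) : ℤ) •
        ((List.finRange (k+2)).map (fun (i : Fin (k+2)) =>
          if (i : ℕ) ≤ (if (i : ℕ) = 0 then n else 1) + ((colEquiv k ((0 : Fin (k+2)), τ)) i : ℕ)
          then Hh ((if (i : ℕ) = 0 then n else 1) + ((colEquiv k ((0 : Fin (k+2)), τ)) i : ℕ) - (i : ℕ))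
          else 0)).prod
      = Hh n * imm' Hh (k+1) (fun _ => 1) := by
    have hswap : Equiv.swap (0 : Fin (k+2)) 0 = 1 := by
      rw [Equiv.swap_self]; rfl
    have hterm : ∀ τ : Equiv.Perm (Fin (k+1)),
        ((Equiv.Perm.sign (colEquiv k ((0 : Fin (k+2)), τ)) : ℤˣ) : ℤ) •
        ((List.finRange (k+2)).map (fun (i : Fin (k+2)) =>
          if (i : ℕ) ≤ (if (i : ℕ) = 0 then n else 1) + ((colEquiv k ((0 : Fin (k+2)), τ)) i : ℕ)
          then Hh ((if (i : ℕ) = 0 then n else 1) + ((colEquiv k ((0 : Fin (k+2)), τ)) i : ℕ) - (i : ℕ))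
          else 0)).prod
        = Hh n * (((Equiv.Perm.sign τ : ℤˣ) : ℤ) •
            ((List.finRange (k+1)).map (fun (x : Fin (k+1)) =>
              if (x : ℕ) ≤ 1 + (τ x : ℕ) then Hh (1 + (τ x : ℕ) - (x : ℕ)) else 0)).prod) := by
      intro τ
      rw [colEquiv_apply, hswap, mul_one, ext_sign]
      rw [List.finRange_succ, List.map_cons, List.prod_cons, List.map_map]
      have hhead : (if ((0 : Fin (k+2)) : ℕ) ≤ (if ((0 : Fin (k+2)) : ℕ) = 0 then n else 1) + ((Equiv.Perm.decomposeFin.symm ((0 : Fin (k+2)), τ)) 0 : ℕ)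
          then Hh ((if ((0 : Fin (k+2)) : ℕ) = 0 then n else 1) + ((Equiv.Perm.decomposeFin.symm ((0 : Fin (k+2)), τ)) 0 : ℕ) - ((0 : Fin (k+2)) : ℕ))
          else 0) = Hh n := by
        rw [ext_zero]
        simp
      have htail : ((List.finRange (k+1)).map ((fun (i : Fin (k+2)) =>
          if (i : ℕ) ≤ (if (i : ℕ) = 0 then n else 1) + ((Equiv.Perm.decomposeFin.symm ((0 : Fin (k+2)), τ)) i : ℕ)
          then Hh ((if (i : ℕ) = 0 then n else 1) + ((Equiv.Perm.decomposeFin.symm ((0 : Fin (k+2)), τ)) i : ℕ) - (i : ℕ))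
          else 0) ∘ Fin.succ))
          = ((List.finRange (k+1)).map (fun (x : Fin (k+1)) =>
              if (x : ℕ) ≤ 1 + (τ x : ℕ) then Hh (1 + (τ x : ℕ) - (x : ℕ)) else 0)) := by
        apply List.map_congr_left
        intro x _
        simp only [Function.comp_apply, ext_succ, Fin.val_succ]
        rw [if_neg (show ¬((x:ℕ) + 1 = 0) by omega)]
        exact if_congr (by omega) (by congr 1; omega) rfl
      rw [hhead, htail, mul_smul_comm]
    rw [Finset.sum_congr rfl (fun τ _ => hterm τ), ← Finset.mul_sum]
    rfl
  have hB : ∑ τ : Equiv.Perm (Fin (k+1)),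
      ((Equiv.Perm.sign (colEquiv k (((0 : Fin (k+1)).succ : Fin (k+2)), τ)) : ℤˣ) : ℤ) •
        ((List.finRange (k+2)).map (fun (i : Fin (k+2)) =>
          if (i : ℕ) ≤ (if (i : ℕ) = 0 then n else 1) + ((colEquiv k (((0 : Fin (k+1)).succ : Fin (k+2)), τ)) i : ℕ)
          then Hh ((if (i : ℕ) = 0 then n else 1) + ((colEquiv k (((0 : Fin (k+1)).succ : Fin (k+2)), τ)) i : ℕ) - (i : ℕ))
          else 0)).prod
      = - imm' Hh (k+1) (fun j => if j = 0 then n+1 else 1) := by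
    have h01 : (0 : Fin (k+2)) ≠ (0 : Fin (k+1)).succ := (Fin.succ_ne_zero _).symm
    rw [imm', ← Finset.sum_neg_distrib]
    apply Finset.sum_congr rfl
    intro τ _
    have hσ0 : (Equiv.Perm.decomposeFin.symm ((0 : Fin (k+2)), τ) * Equiv.swap 0 (0 : Fin (k+1)).succ) 0 = (τ 0).succ := by
      rw [Equiv.Perm.mul_apply, Equiv.swap_apply_left, ext_succ]
    have hσ1 : (Equiv.Perm.decomposeFin.symm ((0 : Fin (k+2)), τ) * Equiv.swap 0 (0 : Fin (k+1)).succ) ((0 : Fin (k+1)).succ) = 0 := by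
      rw [Equiv.Perm.mul_apply, Equiv.swap_apply_right, ext_zero]
    have hσss : ∀ x : Fin k, (Equiv.Perm.decomposeFin.symm ((0 : Fin (k+2)), τ) * Equiv.swap 0 (0 : Fin (k+1)).succ) ((x.succ).succ) = (τ x.succ).succ := by
      intro x
      rw [Equiv.Perm.mul_apply,
        Equiv.swap_apply_of_ne_of_ne (Fin.succ_ne_zero _)
          (fun h => Fin.succ_ne_zero x (Fin.succ_injective _ h)), ext_succ]
    rw [colEquiv_apply, map_mul, ext_sign, Equiv.Perm.sign_swap h01]
    rw [List.finRange_succ, List.map_cons, List.prod_cons, List.map_map,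
        List.finRange_succ, List.map_cons, List.prod_cons, List.map_map]
    simp only [Function.comp_apply, hσ0, hσ1, hσss, Fin.val_succ, Fin.val_zero]
    rw [List.map_cons, List.prod_cons, List.map_map]
    simp only [if_true, Fin.val_zero, Fin.val_succ, Nat.sub_zero, Nat.add_zero,
      Nat.zero_le, Nat.le_refl, Nat.add_eq_zero, Nat.succ_ne_zero, and_false,
      if_false, ite_true, ite_false, Nat.le_add_left, one_ne_zero, false_and]
    have hsg : ((Equiv.Perm.sign τ * -1 : ℤˣ) : ℤ) = -((Equiv.Perm.sign τ : ℤˣ) : ℤ) := by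
      simp
    rw [show (1 : ℕ) - (0+1) = 0 from rfl, h0, one_mul, hsg, neg_smul, neg_inj]
    congr 1
    congr 1
    · congr 1
      omega
    · congr 1
      apply List.map_congr_left
      intro x _
      simp only [Function.comp_apply, hσss, Fin.val_succ]
      rw [if_neg (show ¬((x:ℕ)+1+1 = 0) by omega), if_neg (show ¬((x:ℕ)+1 = 0) by omega)]
      exact if_congr (by omega) (by congr 1; omega) rfl
  have hC : ∀ q : Fin k, ∑ τ : Equiv.Perm (Fin (k+1)),
      ((Equiv.Perm.sign (colEquiv k ((q.succ.succ : Fin (k+2)), τ)) : ℤˣ) : ℤ) •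
        ((List.finRange (k+2)).map (fun (i : Fin (k+2)) =>
          if (i : ℕ) ≤ (if (i : ℕ) = 0 then n else 1) + ((colEquiv k ((q.succ.succ : Fin (k+2)), τ)) i : ℕ)
          then Hh ((if (i : ℕ) = 0 then n else 1) + ((colEquiv k ((q.succ.succ : Fin (k+2)), τ)) i : ℕ) - (i : ℕ))
          else 0)).prod
      = 0 := by
    intro q
    apply Finset.sum_eq_zero
    intro τ _
    have hp : colEquiv k ((q.succ.succ : Fin (k+2)), τ) q.succ.succ = 0 := by
      rw [colEquiv_apply, Equiv.Perm.mul_apply, Equiv.swap_apply_right, ext_zero]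
    have hent : (fun (i : Fin (k+2)) =>
        if (i : ℕ) ≤ (if (i : ℕ) = 0 then n else 1) + ((colEquiv k ((q.succ.succ : Fin (k+2)), τ)) i : ℕ)
        then Hh ((if (i : ℕ) = 0 then n else 1) + ((colEquiv k ((q.succ.succ : Fin (k+2)), τ)) i : ℕ) - (i : ℕ))
        else 0) q.succ.succ = 0 := by
      simp only [hp, Fin.val_succ, Fin.val_zero]
      rw [if_neg (show ¬((q:ℕ) + 1 + 1 = 0) by omega), if_neg (by omega)]
    have hmem : (0 : N) ∈ (List.finRange (k+2)).map (fun (i : Fin (k+2)) =>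
        if (i : ℕ) ≤ (if (i : ℕ) = 0 then n else 1) + ((colEquiv k ((q.succ.succ : Fin (k+2)), τ)) i : ℕ)
        then Hh ((if (i : ℕ) = 0 then n else 1) + ((colEquiv k ((q.succ.succ : Fin (k+2)), τ)) i : ℕ) - (i : ℕ))
        else 0) := by
      exact List.mem_map.2 ⟨_, List.mem_finRange _, hent⟩
    rw [List.prod_eq_zero hmem, smul_zero]
  rw [hA, hB]
  have : ∑ q : Fin k, ∑ τ : Equiv.Perm (Fin (k+1)),
      ((Equiv.Perm.sign (colEquiv k ((q.succ.succ : Fin (k+2)), τ)) : ℤˣ) : ℤ) •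
        ((List.finRange (k+2)).map (fun (i : Fin (k+2)) =>
          if (i : ℕ) ≤ (if (i : ℕ) = 0 then n else 1) + ((colEquiv k ((q.succ.succ : Fin (k+2)), τ)) i : ℕ)
          then Hh ((if (i : ℕ) = 0 then n else 1) + ((colEquiv k ((q.succ.succ : Fin (k+2)), τ)) i : ℕ) - (i : ℕ))
          else 0)).prod = 0 := by
    exact Finset.sum_eq_zero (fun q _ => hC q)
  rw [this, add_zero, sub_eq_add_neg]


lemma hookExp (h0 : Hh 0 = 1) : ∀ k n : ℕ,
    imm' Hh (k+1) (fun j => if j = 0 then n else 1)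
      = ∑ i ∈ Finset.range (k+1), ((-1:ℤ)^i) • (Hh (n+i) * imm' Hh (k-i) (fun _ => 1)) := by
  intro k
  induction k with
  | zero =>
    intro n
    rw [imm'_one]
    simp [imm'_zero]
  | succ k IH =>
    intro n
    rw [lemA Hh h0 n k]
    rw [Finset.sum_range_succ'
      (fun i => ((-1:ℤ)^i) • (Hh (n+i) * imm' Hh (k+1-i) (fun _ => 1))) (k+1)]
    rw [IH (n+1)]
    have ht : ∀ i ∈ Finset.range (k+1),
        ((-1:ℤ)^(i+1)) • (Hh (n+(i+1)) * imm' Hh (k+1-(i+1)) (fun _ => 1))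
          = -(((-1:ℤ)^i) • (Hh (n+1+i) * imm' Hh (k-i) (fun _ => 1))) := by
      intro i _
      rw [pow_succ, mul_neg_one, neg_smul]
      have e1 : n+(i+1) = n+1+i := by omega
      have e2 : k+1-(i+1) = k-i := by omega
      rw [e1, e2]
    rw [Finset.sum_congr rfl ht, Finset.sum_neg_distrib]
    simp only [pow_zero, one_smul, Nat.add_zero, Nat.sub_zero]
    abel

lemma oneCol (h0 : Hh 0 = 1) : ∀ m : ℕ, imm' Hh m (fun _ => 1) = ((-1:ℤ)^m) • Ee Hh m := by
  intro m
  induction m using Nat.strong_induction_on with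
  | _ m IH =>
    match m with
    | 0 => simp [imm'_zero, Ee_zero]
    | m+1 =>
      have ha : (fun j => if j = 0 then (1:ℕ) else 1) = (fun _ => (1:ℕ)) :=
        funext (fun j => ite_self _)
      rw [← ha, hookExp Hh h0 m 1]
      have hterm : ∀ i ∈ Finset.range (m+1),
          ((-1:ℤ)^i) • (Hh (1+i) * imm' Hh (m-i) (fun _ => 1))
            = ((-1:ℤ)^m) • (Hh (1+i) * Ee Hh (m-i)) := by
        intro i hi
        simp only [Finset.mem_range] at hi
        rw [IH (m-i) (by omega), mul_smul_comm, smul_smul, ← pow_add]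
        congr 2
        omega
      rw [Finset.sum_congr rfl hterm, ← Finset.smul_sum]
      have hsum : ∑ i ∈ Finset.range (m+1), Hh (1+i) * Ee Hh (m-i) = - Ee Hh (m+1) := by
        have h1 := sum_Hh_Ee Hh h0 (m+1)
        rw [Finset.sum_range_succ' (fun c => Hh c * Ee Hh (m+1-c)) (m+1),
          if_neg (Nat.succ_ne_zero m), h0, one_mul] at h1
        have h2 : ∀ i ∈ Finset.range (m+1),
            Hh (i+1) * Ee Hh (m+1-(i+1)) = Hh (1+i) * Ee Hh (m-i) := by
          intro i _
          congr 2 <;> omega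
        rw [Finset.sum_congr rfl h2] at h1
        simp only [Nat.sub_zero] at h1
        exact eq_neg_of_add_eq_zero_left h1
      rw [hsum, smul_neg, ← neg_smul, ← neg_one_mul, ← pow_succ']



lemma immaculate_eq (Hh : ℕ → N) (α : List ℕ) :
    immaculate Hh α = imm' Hh α.length (fun j => α.getD j 0) := by
  rw [immaculate, imm']
  apply Finset.sum_congr rfl
  intro σ _
  congr 1
  congr 1
  apply List.map_congr_left
  intro i _
  have hg : α.get i = α.getD (i:ℕ) 0 := by
    rw [List.getD_eq_getElem α 0 i.isLt]
    simp [List.get_eq_getElem]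
  rw [hg]

lemma imm'_congr (Hh : ℕ → N) (m : ℕ) (a a' : ℕ → ℕ) (h : ∀ j, j < m → a j = a' j) :
    imm' Hh m a = imm' Hh m a' := by
  rw [imm', imm']
  apply Finset.sum_congr rfl
  intro σ _
  congr 1
  congr 1
  apply List.map_congr_left
  intro i _
  rw [h (i:ℕ) i.isLt]

lemma immaculate_hook (Hh : ℕ → N) (n k : ℕ) :
    immaculate Hh (n :: List.replicate k 1)
      = imm' Hh (k+1) (fun j => if j = 0 then n else 1) := by
  rw [immaculate_eq]
  simp only [List.length_cons, List.length_replicate]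
  apply imm'_congr
  intro j hj
  match j with
  | 0 => rfl
  | (j+1) =>
    rw [List.getD_cons_succ, if_neg (Nat.succ_ne_zero j)]
    rw [List.getD_eq_getElem _ _ (by simp; omega)]
    simp

lemma hook_closed (Hh : ℕ → N) (h0 : Hh 0 = 1) (n k : ℕ) :
    immaculate Hh (n :: List.replicate k 1)
      = ((-1:ℤ)^k) • ∑ i ∈ Finset.range (k+1), Hh (n+i) * Ee Hh (k-i) := by
  rw [immaculate_hook, hookExp Hh h0 k n, Finset.smul_sum]
  apply Finset.sum_congr rfl
  intro i hi
  simp only [Finset.mem_range] at hi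
  rw [oneCol Hh h0 (k-i), mul_smul_comm, smul_smul, ← pow_add]
  congr 2
  omega

end NSymAux

/-- in `NSym`, for `n ≥ 1` and `k ≥ 0`, the antipode of the hook
immaculate function satisfies `S(𝒮_{(n,1^k)}) = (-1)^{n+k} 𝒮_{(k+1,1^{n-1})}`. -/
theorem nsym_antipode_hook (K : Type) [Field K] (N : Type) [Ring N]
    [HopfAlgebra K N] (Hh : ℕ → N)
    (h0 : Hh 0 = 1)
    (hcomul : ∀ m : ℕ, Coalgebra.comul (R := K) (Hh m) =
      ∑ i ∈ Finset.range (m + 1), Hh i ⊗ₜ[K] Hh (m - i))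
    (hcounit : ∀ m : ℕ,
      Coalgebra.counit (R := K) (Hh m) = if m = 0 then (1 : K) else 0)
    (n k : ℕ) (hn : 1 ≤ n) :
    HopfAlgebra.antipode (R := K) (immaculate Hh (n :: List.replicate k 1)) =
      ((-1 : ℤ) ^ (n + k)) • immaculate Hh ((k + 1) :: List.replicate (n - 1) 1) := by
  classical
  rw [NSymAux.hook_closed Hh h0 n k, NSymAux.hook_closed Hh h0 (k+1) (n-1)]
  rw [map_zsmul, map_sum]
  have hS : ∀ i ∈ Finset.range (k+1),
      HopfAlgebra.antipode (R := K) (Hh (n+i) * NSymAux.Ee Hh (k-i))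
        = Hh (k-i) * NSymAux.Ee Hh (n+i) :=
    fun i _ => NSymAux.antipode_Hh_Ee Hh h0 hcomul hcounit (n+i) (k-i)
  rw [Finset.sum_congr rfl hS, smul_smul]
  have hsign : ((-1:ℤ)^(n+k)) * ((-1:ℤ)^(n-1)) = -((-1:ℤ)^k) := by
    rw [← pow_add]
    have he : n + k + (n-1) = 2*(n-1) + (k+1) := by omega
    rw [he, pow_add, pow_mul]
    norm_num [pow_succ]
  rw [hsign]
  suffices h : ∑ i ∈ Finset.range (k+1), Hh (k-i) * NSymAux.Ee Hh (n+i)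
      = - ∑ i ∈ Finset.range (n-1+1), Hh (k+1+i) * NSymAux.Ee Hh (n-1-i) by
    rw [h, smul_neg, neg_smul]
  have hkey := NSymAux.sum_Hh_Ee Hh h0 (n+k)
  rw [if_neg (by omega)] at hkey
  have hsplit : ∑ c ∈ Finset.range (n+k+1), Hh c * NSymAux.Ee Hh (n+k-c)
      = (∑ c ∈ Finset.range (k+1), Hh c * NSymAux.Ee Hh (n+k-c))
        + ∑ i ∈ Finset.range n, Hh (k+1+i) * NSymAux.Ee Hh (n+k-(k+1+i)) := by
    rw [Finset.range_eq_Ico,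
      ← Finset.sum_Ico_consecutive _ (Nat.zero_le (k+1)) (by omega : k+1 ≤ n+k+1),
      ← Finset.range_eq_Ico]
    congr 1
    rw [Finset.sum_Ico_eq_sum_range, show n+k+1-(k+1) = n from by omega]
  have hrefl : ∑ c ∈ Finset.range (k+1), Hh c * NSymAux.Ee Hh (n+k-c)
      = ∑ i ∈ Finset.range (k+1), Hh (k-i) * NSymAux.Ee Hh (n+i) := by
    rw [← Finset.sum_range_reflect (fun c => Hh c * NSymAux.Ee Hh (n+k-c)) (k+1)]
    apply Finset.sum_congr rfl
    intro i hi
    simp only [Finset.mem_range] at hi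
    congr 2 <;> omega
  have htail : ∑ i ∈ Finset.range n, Hh (k+1+i) * NSymAux.Ee Hh (n+k-(k+1+i))
      = ∑ i ∈ Finset.range (n-1+1), Hh (k+1+i) * NSymAux.Ee Hh (n-1-i) := by
    rw [show n-1+1 = n by omega]
    apply Finset.sum_congr rfl
    intro i hi
    simp only [Finset.mem_range] at hi
    congr 2
    omega
  rw [hsplit, hrefl, htail] at hkey
  exact eq_neg_of_add_eq_zero_left hkey
end

section
/- In the Malvenuto-Reutenauer Hopf algebra SSym on permutations, the antipode of the identity permutation satisfies S(12...n) = (-1)^n · (n(n-1)...1), i.e., the antipode of the identity permutation of [n] is (-1)^n times the reversal (decreasing) permutation. -/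
open TensorProduct

/-- The multiset of all shuffles (interleavings) of two words. -/
def shuffles {α : Type*} : List α → List α → Multiset (List α)
  | [], w => {w}
  | a :: v, [] => {a :: v}
  | a :: v, b :: w =>
      ((shuffles v (b :: w)).map (a :: ·)) + ((shuffles (a :: v) w).map (b :: ·))
  termination_by v w => v.length + w.length
  decreasing_by all_goals (simp; try omega)

/-- Standardization of a word of distinct letters: replace the smallest letter
by `1`, the next smallest by `2`, and so on. -/
def stw (w : List ℕ) : List ℕ :=
  w.map (fun a => (w.filter (· < a)).length + 1)

/-- `w` is the one-line notation of a permutation of `{1, …, n}` where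
`n = w.length`. -/
def IsPermList (w : List ℕ) : Prop := w.Perm (List.range' 1 w.length)

/- ### Auxiliary lemmas -/

lemma shuffles_nil_left {α : Type*} (w : List α) : shuffles [] w = {w} := by
  simp [shuffles]

lemma shuffles_nil_right {α : Type*} (v : List α) : shuffles v [] = {v} := by
  cases v <;> simp [shuffles]

lemma shuffles_cons_cons {α : Type*} (a b : α) (v w : List α) :
    shuffles (a :: v) (b :: w) =
      ((shuffles v (b :: w)).map (a :: ·)) + ((shuffles (a :: v) w).map (b :: ·)) := by
  rw [shuffles]

lemma map_shift (a k j : ℕ) : (List.range' a k).map (· + j) = List.range' (a + j) k := by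
  have h : List.map (fun x => j + x) (List.range' a k 1) = List.range' (j + a) k 1 :=
    List.map_add_range' a k 1
  have : ((fun x => j + x) : ℕ → ℕ) = (· + j) := by funext x; omega
  rw [this] at h
  rw [h, Nat.add_comm]

lemma rev_range'_succ (i : ℕ) :
    (List.range' 1 (i + 1)).reverse = (i + 1) :: (List.range' 1 i).reverse := by
  apply List.ext_getElem (by simp)
  intro j h1 h2
  rcases j with _ | j <;>
    simp [List.getElem_reverse, List.getElem_range'] <;> omega

lemma take_range' (a k i : ℕ) : (List.range' a k).take i = List.range' a (min i k) := by
  apply List.ext_getElem (by simp)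
  intro j h1 h2
  simp [List.getElem_take, List.getElem_range']

lemma drop_range' (a k i : ℕ) : (List.range' a k).drop i = List.range' (a + i) (k - i) := by
  apply List.ext_getElem (by simp)
  intro j h1 h2
  simp [List.getElem_drop, List.getElem_range']

lemma filter_lt_length (x : ℕ) : ∀ (k a : ℕ),
    ((List.range' a k).filter (· < x)).length = min (x - a) k
  | 0, a => by simp
  | k + 1, a => by
    rw [List.range'_succ]
    by_cases h : a < x <;>
      simp [List.filter_cons, h, filter_lt_length x k (a + 1)] <;> omega

lemma stw_range' (a k : ℕ) : stw (List.range' a k) = List.range' 1 k := by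
  apply List.ext_getElem (by simp [stw])
  intro j h1 h2
  simp only [stw, List.getElem_map, List.getElem_range', filter_lt_length]
  simp only [List.length_range'] at h2
  omega

lemma ipl_range' (k : ℕ) : IsPermList (List.range' 1 k) := by
  unfold IsPermList
  rw [List.length_range']

lemma ipl_rev (k : ℕ) : IsPermList (List.range' 1 k).reverse := by
  unfold IsPermList
  rw [List.length_reverse, List.length_range']
  exact List.reverse_perm _

section Telescope

variable {A : Type} [Ring A] (e : List ℕ → A)

/-- The `i`-th term in the antipode recursion: sum of `e` over shuffles of the
descending word `i ⋯ 1` with the ascending word `(i+1) ⋯ N`. -/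
def gdef (N i : ℕ) : A :=
  ((shuffles ((List.range' 1 i).reverse) (List.range' (i + 1) (N - i))).map e).sum

/-- The common part between consecutive terms. -/
def pdef (N j : ℕ) : A :=
  (((shuffles ((List.range' 1 j).reverse) (List.range' (j + 2) (N - j - 1))).map
    (fun t => (j + 1) :: t)).map e).sum

lemma g_zero (n : ℕ) : gdef e (n + 1) 0 = pdef e (n + 1) 0 := by
  unfold gdef pdef
  simp only [List.range'_zero, List.reverse_nil, shuffles_nil_left, Nat.sub_zero]
  have : List.range' 1 (n + 1) = 1 :: List.range' 2 n := List.range'_succ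
  rw [this]
  simp

lemma g_succ (n j : ℕ) (h : j + 2 ≤ n + 1) :
    gdef e (n + 1) (j + 1) = pdef e (n + 1) j + pdef e (n + 1) (j + 1) := by
  unfold gdef pdef
  rw [rev_range'_succ]
  have h1 : n + 1 - (j + 1) = (n - j - 1) + 1 := by omega
  have h2 : List.range' (j + 2) ((n - j - 1) + 1) = (j + 2) :: List.range' (j + 3) (n - j - 1) :=
    List.range'_succ
  rw [h1]
  have h3 : n + 1 - j - 1 = (n - j - 1) + 1 := by omega
  rw [h3, h2, shuffles_cons_cons]
  simp [Multiset.map_add]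

lemma p_last (n : ℕ) : pdef e (n + 1) n = e ((List.range' 1 (n + 1)).reverse) := by
  unfold pdef
  have h0 : n + 1 - n - 1 = 0 := by omega
  rw [h0]
  simp only [List.range'_zero, shuffles_nil_right]
  rw [rev_range'_succ]
  simp

lemma telescope (n : ℕ) : ∀ m, m ≤ n →
    ∑ i ∈ Finset.range (m + 1), ((-1 : ℤ) ^ i) • gdef e (n + 1) i =
      ((-1 : ℤ) ^ m) • pdef e (n + 1) m := by
  intro m
  induction m with
  | zero => intro _; simp [g_zero]
  | succ m ihm =>
    intro hm
    rw [Finset.sum_range_succ, ihm (by omega), g_succ e n m (by omega)]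
    rw [smul_add, pow_succ]
    rw [mul_smul, mul_smul]
    simp only [neg_smul, one_smul, smul_neg]
    abel

end Telescope

/-- in the Malvenuto–Reutenauer Hopf algebra `SSym`, the antipode
of the identity permutation satisfies `S(12⋯n) = (-1)^n (n(n-1)⋯1)`.  `SSym` is
formalized as a Hopf algebra `A` over a field `K` with a basis-indexing map `e`
on permutations (as one-line words), whose product is given by shifted
shuffles and whose coproduct is given by standardized deconcatenations. -/
theorem ssym_antipode_identity (K : Type) [Field K] (A : Type) [Ring A]
    [HopfAlgebra K A] (e : List ℕ → A)
    (hone : e [] = 1)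
    (hmul : ∀ v w : List ℕ, IsPermList v → IsPermList w →
      e v * e w = ((shuffles v (w.map (· + v.length))).map e).sum)
    (hcomul : ∀ w : List ℕ, IsPermList w →
      Coalgebra.comul (R := K) (e w) =
        ∑ i ∈ Finset.range (w.length + 1),
          e (stw (w.take i)) ⊗ₜ[K] e (stw (w.drop i)))
    (hcounit : ∀ w : List ℕ, IsPermList w →
      Coalgebra.counit (R := K) (e w) = if w = [] then (1 : K) else 0)
    (n : ℕ) :
    HopfAlgebra.antipode (R := K) (e (List.range' 1 n)) =
      ((-1 : ℤ) ^ n) • e (List.range' 1 n).reverse := by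
  induction n using Nat.strong_induction_on with
  | _ n ih =>
  -- a cleaned-up version of the coproduct
  have hcm : ∀ N : ℕ, Coalgebra.comul (R := K) (e (List.range' 1 N)) =
      ∑ i ∈ Finset.range (N + 1),
        e (List.range' 1 i) ⊗ₜ[K] e (List.range' 1 (N - i)) := by
    intro N
    rw [hcomul _ (ipl_range' N)]
    simp only [List.length_range']
    refine Finset.sum_congr rfl fun i hi => ?_
    rw [take_range', drop_range', stw_range', stw_range',
      Nat.min_eq_left (by simpa using Nat.lt_succ_iff.mp (Finset.mem_range.mp hi))]
  -- the antipode recursion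
  have key : ∀ N : ℕ,
      ∑ i ∈ Finset.range (N + 1),
        HopfAlgebra.antipode (R := K) (e (List.range' 1 i)) * e (List.range' 1 (N - i)) =
        algebraMap K A (Coalgebra.counit (R := K) (e (List.range' 1 N))) := by
    intro N
    have H := HopfAlgebra.mul_antipode_rTensor_comul_apply (R := K) (A := A)
      (a := e (List.range' 1 N))
    rw [hcm N] at H
    simpa only [map_sum, LinearMap.rTensor_tmul, LinearMap.mul'_apply] using H
  rcases n with _ | n
  · -- n = 0
    have h0 := key 0
    rw [Nat.zero_add, Finset.sum_range_one] at h0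
    simp only [Nat.sub_zero, List.range'_zero] at h0
    rw [hcounit [] (by simp [IsPermList]), if_pos rfl, map_one, hone, mul_one] at h0
    simp only [List.range'_zero, List.reverse_nil, pow_zero, one_smul, hone]
    exact h0
  · -- n + 1
    have hN := key (n + 1)
    rw [hcounit _ (ipl_range' (n + 1))] at hN
    rw [if_neg (by simp), map_zero] at hN
    rw [Finset.sum_range_succ] at hN
    simp only [Nat.sub_self, List.range'_zero, hone, mul_one] at hN
    -- rewrite the partial sum using the induction hypothesis
    have hsum : ∑ i ∈ Finset.range (n + 1),
        HopfAlgebra.antipode (R := K) (e (List.range' 1 i)) * e (List.range' 1 (n + 1 - i)) =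
        ∑ i ∈ Finset.range (n + 1), ((-1 : ℤ) ^ i) • gdef e (n + 1) i := by
      refine Finset.sum_congr rfl fun i hi => ?_
      have hi' : i < n + 1 := Finset.mem_range.mp hi
      rw [ih i hi', smul_mul_assoc, hmul _ _ (ipl_rev i) (ipl_range' (n + 1 - i))]
      unfold gdef
      rw [List.length_reverse, List.length_range', map_shift, Nat.add_comm 1 i]
    rw [hsum, telescope e n n le_rfl, p_last] at hN
    have hS := eq_neg_of_add_eq_zero_right hN
    rw [hS, pow_succ, mul_smul]
    simp
end

section
/- In the Malvenuto-Reutenauer Hopf algebra SSym, the coefficient of the identity permutation in the antipode of σ ∈ S_n is (-1)^n if σ = n(n-1)...1 and 0 otherwise: [12...n]S(σ) = (-1)^n if σ is the decreasing permutation, else 0. -/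
open TensorProduct

namespace SSymAux

open List

variable {α : Type*}

theorem mem_shuffles_append : ∀ (v w : List α), v ++ w ∈ shuffles v w
  | [], w => by simp [shuffles]
  | a :: v, [] => by simp [shuffles]
  | a :: v, b :: w => by
      rw [shuffles]
      refine Multiset.mem_add.2 (Or.inl ?_)
      exact Multiset.mem_map.2 ⟨v ++ b :: w, mem_shuffles_append v (b :: w), rfl⟩
  termination_by v w => v.length + w.length
  decreasing_by all_goals (simp; try omega)

theorem perm_of_mem_shuffles : ∀ (v w x : List α), x ∈ shuffles v w → x.Perm (v ++ w)
  | [], w, x, h => by simp [shuffles] at h; simp [h]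
  | a :: v, [], x, h => by simp [shuffles] at h; simp [h]
  | a :: v, b :: w, x, h => by
      rw [shuffles] at h
      rcases Multiset.mem_add.1 h with h | h <;>
        obtain ⟨y, hy, rfl⟩ := Multiset.mem_map.1 h
      · exact ((perm_of_mem_shuffles v (b :: w) y hy).cons a)
      · refine ((perm_of_mem_shuffles (a :: v) w y hy).cons b).trans ?_
        exact (List.perm_middle).symm
  termination_by v w => v.length + w.length
  decreasing_by all_goals (simp; try omega)

theorem sublist_left_of_mem_shuffles : ∀ (v w x : List α), x ∈ shuffles v w → v <+ x
  | [], w, x, h => by simp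
  | a :: v, [], x, h => by simp [shuffles] at h; simp [h]
  | a :: v, b :: w, x, h => by
      rw [shuffles] at h
      rcases Multiset.mem_add.1 h with h | h <;>
        obtain ⟨y, hy, rfl⟩ := Multiset.mem_map.1 h
      · exact (sublist_left_of_mem_shuffles v (b :: w) y hy).cons₂ a
      · exact (sublist_left_of_mem_shuffles (a :: v) w y hy).cons b
  termination_by v w => v.length + w.length
  decreasing_by all_goals (simp; try omega)

theorem sublist_right_of_mem_shuffles : ∀ (v w x : List α), x ∈ shuffles v w → w <+ x
  | [], w, x, h => by simp [shuffles] at h; simp [h]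
  | a :: v, [], x, h => by simp
  | a :: v, b :: w, x, h => by
      rw [shuffles] at h
      rcases Multiset.mem_add.1 h with h | h <;>
        obtain ⟨y, hy, rfl⟩ := Multiset.mem_map.1 h
      · exact (sublist_right_of_mem_shuffles v (b :: w) y hy).cons a
      · exact (sublist_right_of_mem_shuffles (a :: v) w y hy).cons₂ b
  termination_by v w => v.length + w.length
  decreasing_by all_goals (simp; try omega)

theorem nodup_shuffles [DecidableEq α] : ∀ (v w : List α), (v ++ w).Nodup →
    (shuffles v w).Nodup
  | [], w, h => by simp [shuffles]
  | a :: v, [], h => by simp [shuffles]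
  | a :: v, b :: w, h => by
      rw [shuffles, Multiset.nodup_add]
      have hav : (v ++ b :: w).Nodup := by
        have := h.sublist (List.sublist_cons_self a (v ++ b :: w))
        simpa using this
      have hbw : ((a :: v) ++ w).Nodup :=
        h.sublist (List.Sublist.append_left (List.sublist_cons_self b w) (a :: v))
      have hab : a ≠ b := by
        intro hEq
        have : a ∈ v ++ b :: w := by simp [hEq]
        exact (List.nodup_cons.1 h).1 this
      refine ⟨Multiset.Nodup.map List.cons_injective
          (nodup_shuffles v (b :: w) hav),
        Multiset.Nodup.map List.cons_injective
          (nodup_shuffles (a :: v) w hbw), Multiset.disjoint_left.2 ?_⟩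
      intro x hx hx'
      obtain ⟨y, _, rfl⟩ := Multiset.mem_map.1 hx
      obtain ⟨z, _, h2⟩ := Multiset.mem_map.1 hx'
      have h3 : b :: z = a :: y := h2
      simp only [List.cons.injEq] at h3
      exact hab h3.1.symm
  termination_by v w => v.length + w.length
  decreasing_by all_goals (simp; try omega)

/-! ### rank and standardization -/

theorem filter_length_lt_of_mem {w : List ℕ} {p : ℕ → Bool} {a : ℕ} (ha : a ∈ w)
    (hpa : ¬ p a) : (w.filter p).length < w.length := by
  refine lt_of_le_of_ne (w.filter_sublist).length_le (fun hEq => ?_)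
  have : w.filter p = w := (w.filter_sublist).eq_of_length hEq
  rw [← this] at ha
  exact hpa (List.of_mem_filter ha)

theorem rank_lt_rank {w : List ℕ} {a b : ℕ} (ha : a ∈ w) (hab : a < b) :
    (w.filter (· < a)).length < (w.filter (· < b)).length := by
  have hsub : w.filter (· < a) <+ w.filter (· < b) :=
    List.monotone_filter_right w (fun x hx => by
      simp only [decide_eq_true_eq] at hx ⊢; omega)
  refine lt_of_le_of_ne hsub.length_le (fun hEq => ?_)
  have hEq2 : w.filter (· < a) = w.filter (· < b) := hsub.eq_of_length hEq
  have hamem : a ∈ w.filter (· < b) := List.mem_filter.2 ⟨ha, by simpa using hab⟩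
  rw [← hEq2] at hamem
  have := List.of_mem_filter hamem
  simp at this

theorem rank_lt_iff {w : List ℕ} {a b : ℕ} (ha : a ∈ w) (hb : b ∈ w) :
    (w.filter (· < a)).length < (w.filter (· < b)).length ↔ a < b := by
  constructor
  · intro h
    rcases lt_trichotomy a b with h' | rfl | h'
    · exact h'
    · omega
    · exact absurd (rank_lt_rank hb h') (by omega)
  · exact rank_lt_rank ha

theorem length_stw (w : List ℕ) : (stw w).length = w.length := by simp [stw]

theorem isPermList_stw {w : List ℕ} (hw : w.Nodup) : IsPermList (stw w) := by
  have hnd : (stw w).Nodup := by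
    refine hw.map_on (fun a ha b hb hEq => ?_)
    simp only [add_left_inj] at hEq
    rcases lt_trichotomy a b with h' | h' | h'
    · exact absurd (rank_lt_rank ha h') (by omega)
    · exact h'
    · exact absurd (rank_lt_rank hb h') (by omega)
  have hsub : stw w ⊆ List.range' 1 w.length := by
    intro x hx
    obtain ⟨a, ha, rfl⟩ := List.mem_map.1 hx
    have h1 : (w.filter (· < a)).length < w.length :=
      filter_length_lt_of_mem ha (by simp)
    rw [List.mem_range']
    exact ⟨(w.filter (· < a)).length, h1, by omega⟩
  have hsp : stw w <+~ List.range' 1 w.length := List.subperm_of_subset hnd hsub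
  have := hsp.perm_of_length_le (by simp [length_stw])
  rwa [IsPermList, length_stw]

theorem isPermList_nodup {w : List ℕ} (hw : IsPermList w) : w.Nodup :=
  hw.nodup_iff.2 (List.nodup_range' (s := 1) (n := w.length))

instance : IsAntisymm ℕ (· < ·) := ⟨fun _ _ h h' => absurd h' (Nat.lt_asymm h)⟩
instance : IsAntisymm ℕ (· > ·) := ⟨fun _ _ h h' => absurd h' (Nat.lt_asymm h)⟩

theorem sorted_lt_range' (s n : ℕ) : (List.range' s n).Pairwise (· < ·) := by
  have := List.pairwise_lt_range' (s := s) (n := n) 1 (by simp)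
  simpa using this

theorem sorted_gt_range'_reverse (s n : ℕ) :
    ((List.range' s n).reverse).Pairwise (· > ·) :=
  List.pairwise_reverse.2 (by simpa [flip] using sorted_lt_range' s n)

theorem eq_range'_of_sorted {w : List ℕ} (hw : IsPermList w)
    (hs : w.Pairwise (· < ·)) : w = List.range' 1 w.length :=
  List.Perm.eq_of_pairwise' hs (sorted_lt_range' 1 w.length) hw

theorem eq_rev_range'_of_sorted {w : List ℕ} (hw : IsPermList w)
    (hs : w.Pairwise (· > ·)) : w = (List.range' 1 w.length).reverse := by
  have h1 : w.reverse.Pairwise (· < ·) := List.pairwise_reverse.2 (by simpa [flip] using hs)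
  have h2 : w.reverse.Perm (List.range' 1 w.reverse.length) := by
    simpa using (w.reverse_perm.trans hw)
  have := List.Perm.eq_of_pairwise' h1 (by simpa using sorted_lt_range' 1 w.length) h2
  rw [← List.reverse_reverse w, this]
  simp

theorem stw_sorted_lt_iff {w : List ℕ} :
    (stw w).Pairwise (· < ·) ↔ w.Pairwise (· < ·) := by
  rw [stw, List.pairwise_map]
  constructor <;> intro h <;>
    refine List.Pairwise.imp_of_mem (fun {a b} ha hb hab => ?_) h
  · have := (rank_lt_iff ha hb).1 (by omega)
    exact this
  · have := rank_lt_rank ha hab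
    omega

theorem stw_sorted_gt_iff {w : List ℕ} :
    (stw w).Pairwise (· > ·) ↔ w.Pairwise (· > ·) := by
  rw [stw, List.pairwise_map]
  constructor <;> intro h <;>
    refine List.Pairwise.imp_of_mem (fun {a b} ha hb hab => ?_) h
  · have := (rank_lt_iff hb ha).1 (by omega)
    exact this
  · have := rank_lt_rank hb hab
    omega

theorem stw_eq_range'_iff {w : List ℕ} (hw : w.Nodup) :
    stw w = List.range' 1 w.length ↔ w.Pairwise (· < ·) := by
  constructor
  · intro h
    rw [← stw_sorted_lt_iff, h]
    exact sorted_lt_range' 1 w.length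
  · intro h
    have := eq_range'_of_sorted (isPermList_stw hw) (stw_sorted_lt_iff.2 h)
    rwa [length_stw] at this

theorem stw_eq_rev_range'_iff {w : List ℕ} (hw : w.Nodup) :
    stw w = (List.range' 1 w.length).reverse ↔ w.Pairwise (· > ·) := by
  constructor
  · intro h
    rw [← stw_sorted_gt_iff, h]
    exact sorted_gt_range'_reverse 1 w.length
  · intro h
    have := eq_rev_range'_of_sorted (isPermList_stw hw) (stw_sorted_gt_iff.2 h)
    rwa [length_stw] at this

theorem stw_id {σ : List ℕ} (hσ : IsPermList σ) : stw σ = σ := by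
  have key : ∀ a ∈ σ, (σ.filter (· < a)).length + 1 = a := by
    intro a ha
    have hmem : a ∈ List.range' 1 σ.length := hσ.subset ha
    rw [List.mem_range'] at hmem
    obtain ⟨i, hi, rfl⟩ := hmem
    simp only [one_mul]
    have hperm := (hσ.filter (· < 1 + i))
    have hlen : (σ.filter (· < 1 + i)).length
        = ((List.range' 1 σ.length).filter (· < 1 + i)).length := hperm.length_eq
    have hsplit : List.range' 1 σ.length = List.range' 1 i ++ List.range' (1 + i) (σ.length - i) := by
      rw [List.range'_append_1]
      congr 1
      omega
    rw [hsplit, List.filter_append] at hlen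
    have h1 : (List.range' 1 i).filter (· < 1 + i) = List.range' 1 i := by
      refine List.filter_eq_self.2 (fun x hx => ?_)
      rw [List.mem_range'] at hx
      obtain ⟨j, hj, rfl⟩ := hx
      simp only [decide_eq_true_eq]
      omega
    have h2 : (List.range' (1 + i) (σ.length - i)).filter (· < 1 + i) = [] := by
      refine List.filter_eq_nil_iff.2 (fun x hx => ?_)
      rw [List.mem_range'] at hx
      obtain ⟨j, hj, rfl⟩ := hx
      simp only [decide_eq_true_eq]
      omega
    rw [h1, h2] at hlen
    simp at hlen
    omega
  rw [stw]
  calc σ.map (fun a => (σ.filter (· < a)).length + 1) = σ.map id := by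
        refine List.map_congr_left (fun a ha => ?_)
        simpa using key a ha
    _ = σ := List.map_id σ

/-! ### counting -/

theorem sum_map_ite {K : Type*} [AddCommMonoid K] (c : K) (v : List ℕ) :
    ∀ (l : List (List ℕ)), l.Nodup →
      (l.map (fun w => if w = v then c else 0)).sum = if v ∈ l then c else 0
  | [], _ => by simp
  | w :: l, h => by
    rw [List.map_cons, List.sum_cons, sum_map_ite c v l (List.nodup_cons.1 h).2]
    by_cases hwv : w = v
    · subst hwv
      have hv : w ∉ l := (List.nodup_cons.1 h).1
      simp [hv]
    · simp only [if_neg hwv, zero_add, List.mem_cons]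
      by_cases hvl : v ∈ l
      · rw [if_pos hvl, if_pos (Or.inr hvl)]
      · rw [if_neg hvl, if_neg ?_]
        rintro (rfl | hh)
        · exact hwv rfl
        · exact hvl hh

theorem shuffles_count {K : Type*} [AddCommMonoid K] (c : K) {i m : ℕ} {a u : List ℕ}
    (ha : IsPermList a) (hal : a.length = i) (hu : IsPermList u) (hul : u.length = m) :
    ((shuffles a (u.map (· + i))).toList.map
        (fun w => if w = List.range' 1 (i + m) then c else 0)).sum =
      if a = List.range' 1 i ∧ u = List.range' 1 m then c else 0 := by
  set b := u.map (· + i) with hb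
  have hbperm : b.Perm (List.range' (i + 1) m) := by
    have h1 : b.Perm ((List.range' 1 m).map (· + i)) := by
      rw [hb, ← hul]
      exact hu.map _
    refine h1.trans ?_
    have : (List.range' 1 m).map (· + i) = (List.range' 1 m).map (i + ·) := by
      refine List.map_congr_left (fun x _ => by omega)
    rw [this, List.map_add_range', Nat.add_comm i 1]
  have happ : List.range' 1 i ++ List.range' (i + 1) m = List.range' 1 (i + m) := by
    have h0 := List.range'_append_1 (s := 1) (m := i) (n := m)
    rw [show 1 + i = i + 1 by omega] at h0
    exact h0
  have habperm : (a ++ b).Perm (List.range' 1 (i + m)) := by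
    refine ((ha.append hbperm).trans ?_)
    rw [hal, happ]
  have habnd : (a ++ b).Nodup := habperm.nodup_iff.2 List.nodup_range'
  have hsnd : (shuffles a b).toList.Nodup := by
    rw [← Multiset.coe_nodup, Multiset.coe_toList]
    exact nodup_shuffles a b habnd
  rw [sum_map_ite c _ _ hsnd]
  have hmem : List.range' 1 (i + m) ∈ (shuffles a b).toList ↔
      (a = List.range' 1 i ∧ u = List.range' 1 m) := by
    rw [Multiset.mem_toList]
    constructor
    · intro hx
      have hsorted := sorted_lt_range' 1 (i + m)
      have hsa : a.Pairwise (· < ·) :=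
        hsorted.sublist (sublist_left_of_mem_shuffles a b _ hx)
      have hsb : b.Pairwise (· < ·) :=
        hsorted.sublist (sublist_right_of_mem_shuffles a b _ hx)
      have hA : a = List.range' 1 i := by
        have := eq_range'_of_sorted ha hsa
        rwa [hal] at this
      refine ⟨hA, ?_⟩
      have hB : b = List.range' (i + 1) m :=
        List.Perm.eq_of_pairwise' hsb (sorted_lt_range' _ _) hbperm
      have hmapeq : u.map (· + i) = (List.range' 1 m).map (· + i) := by
        rw [← hb] at *
        rw [hB]
        have : (List.range' 1 m).map (· + i) = (List.range' 1 m).map (i + ·) :=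
          List.map_congr_left (fun x _ => by omega)
        rw [this, List.map_add_range', Nat.add_comm i 1]
      exact List.map_injective_iff.2 (fun x y hxy => by omega) hmapeq
    · rintro ⟨rfl, rfl⟩
      have hB : b = List.range' (i + 1) m := by
        rw [hb]
        have : (List.range' 1 m).map (· + i) = (List.range' 1 m).map (i + ·) :=
          List.map_congr_left (fun x _ => by omega)
        rw [this, List.map_add_range', Nat.add_comm i 1]
      have hmm := mem_shuffles_append (List.range' 1 i) b
      rw [hB] at hmm ⊢
      rwa [happ] at hmm
  rcases Classical.em (a = List.range' 1 i ∧ u = List.range' 1 m) with h | h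
  · rw [if_pos (hmem.2 h), if_pos h]
  · rw [if_neg (fun hc => h (hmem.1 hc)), if_neg h]

/-! ### the combinatorial identity -/

/-- element accessor with default -/
def el (s : List ℕ) (j : ℕ) : ℕ := s.getD j 0

theorem el_eq {s : List ℕ} {j : ℕ} (h : j < s.length) : el s j = s[j] :=
  List.getD_eq_getElem s 0 h

theorem sorted_iff_el {r : ℕ → ℕ → Prop} {s : List ℕ} :
    s.Pairwise r ↔ ∀ j k, j < k → k < s.length → r (el s j) (el s k) := by
  rw [List.pairwise_iff_getElem]
  constructor
  · intro h j k hjk hk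
    rw [el_eq (by omega), el_eq (by omega)]
    exact h j k (by omega) (by omega) hjk
  · intro h j k hj hk hjk
    have := h j k hjk hk
    rwa [el_eq (by omega), el_eq (by omega)] at this

theorem el_take {s : List ℕ} {i j : ℕ} (h : j < i) (h2 : j < s.length) :
    el (s.take i) j = el s j := by
  rw [el_eq (by simp; omega), el_eq h2, List.getElem_take]

theorem el_drop {s : List ℕ} {i j : ℕ} (h : i + j < s.length) :
    el (s.drop i) j = el s (i + j) := by
  rw [el_eq (by simp; omega), el_eq h, List.getElem_drop]

theorem sorted_take_iff {r : ℕ → ℕ → Prop} {s : List ℕ} {i : ℕ} (hi : i ≤ s.length) :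
    (s.take i).Pairwise r ↔ ∀ j k, j < k → k < i → r (el s j) (el s k) := by
  rw [sorted_iff_el]
  have hlen : (s.take i).length = i := by simp; omega
  rw [hlen]
  constructor
  · intro h j k hjk hk
    have := h j k hjk hk
    rwa [el_take (by omega) (by omega), el_take (by omega) (by omega)] at this
  · intro h j k hjk hk
    rw [el_take (by omega) (by omega), el_take (by omega) (by omega)]
    exact h j k hjk hk

theorem sorted_drop_iff {r : ℕ → ℕ → Prop} {s : List ℕ} {i : ℕ} (hi : i ≤ s.length) :
    (s.drop i).Pairwise r ↔ ∀ j k, i ≤ j → j < k → k < s.length → r (el s j) (el s k) := by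
  rw [sorted_iff_el]
  have hlen : (s.drop i).length = s.length - i := by simp
  rw [hlen]
  constructor
  · intro h j k hij hjk hk
    have := h (j - i) (k - i) (by omega) (by omega)
    rw [el_drop (by omega), el_drop (by omega), show i + (j - i) = j by omega,
      show i + (k - i) = k by omega] at this
    exact this
  · intro h j k hjk hk
    rw [el_drop (by omega), el_drop (by omega)]
    exact h (i + j) (i + k) (by omega) (by omega) (by omega)

theorem el_ne {s : List ℕ} (hnd : s.Nodup) {j k : ℕ} (hjk : j ≠ k)
    (hj : j < s.length) (hk : k < s.length) : el s j ≠ el s k := by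
  rw [el_eq hj, el_eq hk]
  intro h
  exact hjk ((hnd.getElem_inj_iff).1 h)

theorem comb_identity {K : Type*} [CommRing K] (σ : List ℕ) (hnd : σ.Nodup) (hne : σ ≠ []) :
    (∑ i ∈ Finset.range σ.length,
      if (σ.take i).Pairwise (· > ·) ∧ (σ.drop i).Pairwise (· < ·) then ((-1:K)^i) else 0)
    = if σ.Pairwise (· > ·) then -(-1:K)^σ.length else 0 := by
  set n := σ.length with hn
  have hnpos : 0 < n := by
    rw [hn]
    exact List.length_pos_iff.2 hne
  by_cases hsort : σ.Pairwise (· > ·)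
  · rw [if_pos hsort]
    have hgt := sorted_iff_el.1 hsort
    have h0 : (-1:K)^n = (-1:K)^(n-1) * (-1) := by
      rw [← pow_succ, show n-1+1 = n by omega]
    rw [Finset.sum_eq_single_of_mem (n - 1) (Finset.mem_range.2 (by omega))]
    · rw [if_pos, h0]
      · ring
      constructor
      · rw [sorted_take_iff (by omega)]
        intro j k hjk hk
        exact hgt j k hjk (by omega)
      · rw [sorted_drop_iff (by omega)]
        intro j k hij hjk hk
        omega
    · intro i hi hine
      rw [Finset.mem_range] at hi
      rw [if_neg]
      rintro ⟨-, h2⟩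
      rw [sorted_drop_iff (by omega)] at h2
      have h3 := h2 i (i+1) (by omega) (by omega) (by omega)
      have h4 := hgt i (i+1) (by omega) (by omega)
      omega
  · rw [if_neg hsort]
    by_cases hV : ∃ i, i < n ∧ (σ.take i).Pairwise (· > ·) ∧ (σ.drop i).Pairwise (· < ·)
    · set q := Nat.find hV with hq
      obtain ⟨hqn, hPq, hQq⟩ := Nat.find_spec hV
      have hPq' := (sorted_take_iff (by omega)).1 hPq
      have hQq' := (sorted_drop_iff (by omega)).1 hQq
      -- fact 1 : σ.take (q+1) is sorted
      have hPq1 : ∀ j k, j < k → k < q + 1 → el σ j > el σ k := by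
        by_contra hnP
        push_neg at hnP
        obtain ⟨j, k, hjk, hk, hle⟩ := hnP
        have hkq : k = q := by
          by_contra hkq
          have := hPq' j k hjk (by omega)
          omega
        subst hkq
        have hq1 : 1 ≤ q := by omega
        -- show q - 1 also satisfies the condition, contradicting minimality
        have hcontra : q - 1 < n ∧ (σ.take (q-1)).Pairwise (· > ·) ∧
            (σ.drop (q-1)).Pairwise (· < ·) := by
          refine ⟨by omega, ?_, ?_⟩
          · rw [sorted_take_iff (by omega)]
            intro j' k' hjk' hk'
            exact hPq' j' k' hjk' (by omega)
          · rw [sorted_drop_iff (by omega)]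
            intro j' k' hij' hjk' hk'
            have helq : el σ (q-1) < el σ q := by
              have h5 : el σ (q-1) ≤ el σ j := by
                rcases Nat.lt_or_ge j (q-1) with h | h
                · have := hPq' j (q-1) (by omega) (by omega)
                  omega
                · have : j = q - 1 := by omega
                  rw [this]
              have h6 : el σ (q-1) ≠ el σ q := el_ne hnd (by omega) (by omega) (by omega)
              omega
            rcases Nat.lt_or_ge j' q with h | h
            · have hj'q : j' = q - 1 := by omega
              subst hj'q
              rcases Nat.eq_or_lt_of_le (show q ≤ k' by omega) with h' | h'
              · rw [← h']
                exact helq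
              · have := hQq' q k' (by omega) (by omega) (by omega)
                omega
            · exact hQq' j' k' (by omega) hjk' hk'
        exact Nat.find_min hV (show q - 1 < q by omega) hcontra
      -- fact 2 : q + 1 < n
      have hq1n : q + 1 < n := by
        by_contra hc
        have hqeq : q = n - 1 := by omega
        apply hsort
        rw [sorted_iff_el]
        intro j k hjk hk
        exact hPq1 j k hjk (by omega)
      -- the sum has exactly two nonzero terms, q and q+1
      rw [Finset.sum_eq_add_of_mem q (q+1) (Finset.mem_range.2 (by omega))
        (Finset.mem_range.2 (by omega)) (by omega)]
      · rw [if_pos ⟨hPq, hQq⟩, if_pos, pow_succ]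
        · ring
        constructor
        · rw [sorted_take_iff (by omega)]
          exact hPq1
        · rw [sorted_drop_iff (by omega)]
          intro j k hij hjk hk
          exact hQq' j k (by omega) hjk hk
      · intro i hi ⟨hiq, hiq1⟩
        rw [Finset.mem_range] at hi
        rw [if_neg]
        rintro ⟨h1, h2⟩
        have hge : q ≤ i := by
          by_contra hc
          exact Nat.find_min hV (by omega) ⟨hi, h1, h2⟩
        have hgt2 : q + 2 ≤ i := by omega
        have h1' := (sorted_take_iff (by omega)).1 h1
        have h3 := h1' q (q+1) (by omega) (by omega)
        have h4 := hQq' q (q+1) (by omega) (by omega) (by omega)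
        omega
    · push_neg at hV
      refine Finset.sum_eq_zero (fun i hi => ?_)
      rw [Finset.mem_range] at hi
      rw [if_neg]
      rintro ⟨h1, h2⟩
      exact (hV i hi) h1 h2

/-! ### linear combinations of basis elements -/

section Lin

variable {K A : Type} [Field K] [Ring A] [HopfAlgebra K A]

/-- formal linear combination -/
def lin (e : List ℕ → A) (l : List (List ℕ × K)) : A := (l.map fun p => p.2 • e p.1).sum

/-- coefficient extraction -/
def cf (v : List ℕ) (l : List (List ℕ × K)) : K :=
  (l.map fun p => if p.1 = v then p.2 else 0).sum

theorem lin_append (e : List ℕ → A) (l₁ l₂ : List (List ℕ × K)) :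
    lin e (l₁ ++ l₂) = lin e l₁ + lin e l₂ := by simp [lin]

theorem cf_append (v : List ℕ) (l₁ l₂ : List (List ℕ × K)) :
    cf v (l₁ ++ l₂) = cf v l₁ + cf v l₂ := by simp [cf]

theorem lin_bind {β : Type*} (e : List ℕ → A) (L : List β) (f : β → List (List ℕ × K)) :
    lin e (L.flatMap f) = (L.map fun b => lin e (f b)).sum := by
  induction L with
  | nil => simp [lin]
  | cons b L ih => rw [List.flatMap_cons, lin_append, ih, List.map_cons, List.sum_cons]

theorem cf_bind {β : Type*} (v : List ℕ) (L : List β) (f : β → List (List ℕ × K)) :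
    cf v (L.flatMap f) = (L.map fun b => cf v (f b)).sum := by
  induction L with
  | nil => simp [cf]
  | cons b L ih => rw [List.flatMap_cons, cf_append, ih, List.map_cons, List.sum_cons]

theorem lin_map_pair (e : List ℕ → A) (c : K) (l' : List (List ℕ)) :
    lin e (l'.map fun w => (w, c)) = (l'.map fun w => c • e w).sum := by
  rw [lin, List.map_map]
  rfl

theorem cf_map_pair (v : List ℕ) (c : K) (l' : List (List ℕ)) :
    cf v (l'.map fun w => (w, c)) = (l'.map fun w => if w = v then c else 0).sum := by
  rw [cf, List.map_map]
  rfl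

theorem list_sum_neg (l : List A) : (l.map (fun x => -x)).sum = -l.sum := by
  induction l with
  | nil => simp
  | cons a l ih => simp [ih]; abel

theorem list_sum_negK (l : List K) : (l.map (fun x => -x)).sum = -l.sum := by
  induction l with
  | nil => simp
  | cons a l ih => simp [ih]; ring

theorem list_sum_mul (l : List A) (y : A) : l.sum * y = (l.map (· * y)).sum := by
  induction l with
  | nil => simp
  | cons a l ih => simp [add_mul, ih]

theorem lin_mul (e : List ℕ → A) (l : List (List ℕ × K)) (y : A) :
    lin e l * y = (l.map fun p => p.2 • (e p.1 * y)).sum := by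
  rw [lin, list_sum_mul, List.map_map]
  congr 1
  refine List.map_congr_left (fun p _ => ?_)
  simp [smul_mul_assoc]

theorem list_range_sum {M : Type*} [AddCommMonoid M] (f : ℕ → M) (n : ℕ) :
    ((List.range n).map f).sum = ∑ i ∈ Finset.range n, f i := by
  induction n with
  | zero => simp
  | succ n ih =>
      rw [List.range_succ, Finset.sum_range_succ, List.map_append, List.sum_append, ih]
      simp

theorem multiset_sum_map {β M : Type*} [AddCommMonoid M] (s : Multiset β) (f : β → M) :
    (s.map f).sum = (s.toList.map f).sum := by
  conv_lhs => rw [← Multiset.coe_toList s]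
  rw [Multiset.map_coe, Multiset.sum_coe]

end Lin

/-! ### main -/

theorem shuffle_mem_isPermList {i m : ℕ} {a u x : List ℕ} (ha : IsPermList a)
    (hal : a.length = i) (hu : IsPermList u) (hul : u.length = m)
    (hx : x ∈ shuffles a (u.map (· + i))) : IsPermList x ∧ x.length = i + m := by
  set b := u.map (· + i) with hb
  have hbperm : b.Perm (List.range' (i + 1) m) := by
    have h1 : b.Perm ((List.range' 1 m).map (· + i)) := by
      rw [hb, ← hul]
      exact hu.map _
    refine h1.trans ?_
    have : (List.range' 1 m).map (· + i) = (List.range' 1 m).map (i + ·) :=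
      List.map_congr_left (fun x _ => by omega)
    rw [this, List.map_add_range', Nat.add_comm i 1]
  have happ : List.range' 1 i ++ List.range' (i + 1) m = List.range' 1 (i + m) := by
    have h0 := List.range'_append_1 (s := 1) (m := i) (n := m)
    rw [show 1 + i = i + 1 by omega] at h0
    exact h0
  have habperm : (a ++ b).Perm (List.range' 1 (i + m)) := by
    refine (ha.append hbperm).trans ?_
    rw [hal, happ]
  have hxp := (perm_of_mem_shuffles _ _ _ hx).trans habperm
  have hxl : x.length = i + m := by
    have := hxp.length_eq
    simpa using this
  refine ⟨?_, hxl⟩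
  rw [IsPermList, hxl]
  exact hxp

section Main

variable {K A : Type} [Field K] [Ring A] [HopfAlgebra K A]

theorem antipode_one' : HopfAlgebra.antipode (R := K) (1 : A) = 1 := by
  have h1 := HopfAlgebra.mul_antipode_rTensor_comul_apply (R := K) (A := A) 1
  rw [Bialgebra.comul_one, Algebra.TensorProduct.one_def, LinearMap.rTensor_tmul,
    LinearMap.mul'_apply, mul_one, Bialgebra.counit_one] at h1
  rw [h1]
  exact map_one (algebraMap K A)

theorem antipode_repr (e : List ℕ → A)
    (hone : e [] = 1)
    (hmul : ∀ v w : List ℕ, IsPermList v → IsPermList w →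
      e v * e w = ((shuffles v (w.map (· + v.length))).map e).sum)
    (hcomul : ∀ w : List ℕ, IsPermList w →
      Coalgebra.comul (R := K) (e w) =
        ∑ i ∈ Finset.range (w.length + 1),
          e (stw (w.take i)) ⊗ₜ[K] e (stw (w.drop i)))
    (hcounit : ∀ w : List ℕ, IsPermList w →
      Coalgebra.counit (R := K) (e w) = if w = [] then (1 : K) else 0) :
    ∀ (n : ℕ) (σ : List ℕ), σ.length = n → IsPermList σ →
      ∃ l : List (List ℕ × K),
        (∀ p ∈ l, IsPermList p.1 ∧ p.1.length = n) ∧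
        HopfAlgebra.antipode (R := K) (e σ) = lin e l ∧
        cf (List.range' 1 n) l =
          (if σ = (List.range' 1 n).reverse then (-1:K)^n else 0) := by
  intro n
  induction n using Nat.strong_induction_on with
  | _ n IH =>
    intro σ hlen hσ
    rcases Nat.eq_zero_or_pos n with rfl | hpos
    · obtain rfl : σ = [] := List.length_eq_zero_iff.1 hlen
      refine ⟨[([], (1:K))], ?_, ?_, ?_⟩
      · intro p hp
        simp only [List.mem_singleton] at hp
        subst hp
        exact ⟨by simp [IsPermList], rfl⟩
      · rw [hone, antipode_one']
        simp [lin, hone]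
      · simp [cf]
    · have hne : σ ≠ [] := by
        intro h
        rw [h] at hlen
        simp at hlen
        omega
      have hnodup : σ.Nodup := isPermList_nodup hσ
      have htakeP : ∀ i, IsPermList (stw (σ.take i)) := fun i =>
        isPermList_stw (hnodup.sublist (List.take_sublist i σ))
      have htakeL : ∀ i, i ≤ n → (stw (σ.take i)).length = i := fun i hi => by
        rw [length_stw, List.length_take]
        omega
      have hdropP : ∀ i, IsPermList (stw (σ.drop i)) := fun i =>
        isPermList_stw (hnodup.sublist (List.drop_sublist i σ))
      have hdropL : ∀ i, (stw (σ.drop i)).length = n - i := fun i => by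
        rw [length_stw, List.length_drop, hlen]
      have hkey := HopfAlgebra.mul_antipode_rTensor_comul_apply (R := K) (e σ)
      rw [hcomul σ hσ, map_sum, map_sum, hcounit σ hσ, if_neg hne, map_zero] at hkey
      simp only [LinearMap.rTensor_tmul, LinearMap.mul'_apply] at hkey
      rw [hlen, Finset.sum_range_succ] at hkey
      have htn : σ.take n = σ := by
        rw [← hlen]
        exact List.take_length
      have hdn : σ.drop n = [] := by
        rw [← hlen]
        exact List.drop_length
      rw [htn, hdn, stw_id hσ, show stw [] = [] from rfl, hone, mul_one] at hkey
      have hS : HopfAlgebra.antipode (R := K) (e σ) =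
          -∑ i ∈ Finset.range n,
            HopfAlgebra.antipode (R := K) (e (stw (σ.take i))) * e (stw (σ.drop i)) :=
        eq_neg_of_add_eq_zero_right hkey
      have hexists : ∀ i, ∃ l : List (List ℕ × K), i < n →
          ((∀ p ∈ l, IsPermList p.1 ∧ p.1.length = i) ∧
           HopfAlgebra.antipode (R := K) (e (stw (σ.take i))) = lin e l ∧
           cf (List.range' 1 i) l =
             (if stw (σ.take i) = (List.range' 1 i).reverse then (-1:K)^i else 0)) := by
        intro i
        by_cases hi : i < n
        · obtain ⟨l, hl⟩ := IH i hi (stw (σ.take i)) (htakeL i hi.le) (htakeP i)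
          exact ⟨l, fun _ => hl⟩
        · exact ⟨[], fun h => absurd h hi⟩
      choose L hL using hexists
      refine ⟨(List.range n).flatMap (fun i =>
        (L i).flatMap (fun p =>
          (shuffles p.1 ((stw (σ.drop i)).map (· + i))).toList.map (fun w => (w, -p.2)))),
        ?_, ?_, ?_⟩
      · intro p hp
        rw [List.mem_flatMap] at hp
        obtain ⟨i, hi, hpF⟩ := hp
        rw [List.mem_range] at hi
        rw [List.mem_flatMap] at hpF
        obtain ⟨p', hp', hpm⟩ := hpF
        rw [List.mem_map] at hpm
        obtain ⟨w, hw, rfl⟩ := hpm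
        rw [Multiset.mem_toList] at hw
        obtain ⟨hp'P, hp'L⟩ := (hL i hi).1 p' hp'
        have hres := shuffle_mem_isPermList hp'P hp'L (hdropP i) (hdropL i) hw
        exact ⟨hres.1, by rw [hres.2]; omega⟩
      · rw [hS, lin_bind, list_range_sum (fun i => lin e _) n, ← Finset.sum_neg_distrib]
        refine Finset.sum_congr rfl (fun i hi => ?_)
        rw [Finset.mem_range] at hi
        obtain ⟨hwf, hrep, hcfi⟩ := hL i hi
        rw [lin_bind]
        have hterm : ∀ p ∈ L i,
            (fun p => lin e ((shuffles p.1 ((stw (σ.drop i)).map (· + i))).toList.map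
              (fun w => (w, -p.2)))) p
            = (fun p => -(p.2 • (e p.1 * e (stw (σ.drop i))))) p := by
          intro p hp
          obtain ⟨hpP, hpL⟩ := hwf p hp
          simp only []
          rw [lin_map_pair]
          have hm := hmul p.1 (stw (σ.drop i)) hpP (hdropP i)
          rw [hpL, multiset_sum_map] at hm
          have hsm : ((shuffles p.1 ((stw (σ.drop i)).map (· + i))).toList.map
              (fun w => (-p.2) • e w)).sum
              = (-p.2) • ((shuffles p.1 ((stw (σ.drop i)).map (· + i))).toList.map e).sum := by
            rw [List.smul_sum, List.map_map]
            rfl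
          rw [hsm, ← hm, neg_smul]
        rw [List.map_congr_left hterm]
        have : ((L i).map (fun p => -(p.2 • (e p.1 * e (stw (σ.drop i)))))).sum
            = -(((L i).map (fun p => p.2 • (e p.1 * e (stw (σ.drop i))))).sum) := by
          rw [← list_sum_neg, List.map_map]
          rfl
        rw [this, ← lin_mul, ← hrep]
      · rw [cf_bind, list_range_sum (fun i => cf (List.range' 1 n) _) n]
        have hterm : ∀ i ∈ Finset.range n, cf (List.range' 1 n)
            ((L i).flatMap (fun p =>
              (shuffles p.1 ((stw (σ.drop i)).map (· + i))).toList.map (fun w => (w, -p.2))))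
            = -(if (σ.take i).Pairwise (· > ·) ∧ (σ.drop i).Pairwise (· < ·)
                then (-1:K)^i else 0) := by
          intro i hi
          rw [Finset.mem_range] at hi
          obtain ⟨hwf, hrep, hcfi⟩ := hL i hi
          rw [cf_bind]
          have hiffT : stw (σ.take i) = (List.range' 1 i).reverse ↔
              (σ.take i).Pairwise (· > ·) := by
            have h0 := stw_eq_rev_range'_iff (hnodup.sublist (List.take_sublist i σ))
            rwa [List.length_take, show min i σ.length = i by omega] at h0
          have hiffD : stw (σ.drop i) = List.range' 1 (n - i) ↔
              (σ.drop i).Pairwise (· < ·) := by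
            have h0 := stw_eq_range'_iff (hnodup.sublist (List.drop_sublist i σ))
            rwa [List.length_drop, hlen] at h0
          have hpt : ∀ p ∈ L i,
              (fun p => cf (List.range' 1 n)
                ((shuffles p.1 ((stw (σ.drop i)).map (· + i))).toList.map (fun w => (w, -p.2)))) p
              = (fun p => if p.1 = List.range' 1 i ∧ stw (σ.drop i) = List.range' 1 (n - i)
                  then -p.2 else 0) p := by
            intro p hp
            obtain ⟨hpP, hpL⟩ := hwf p hp
            simp only []
            rw [cf_map_pair]
            have hc := shuffles_count (K := K) (-p.2) hpP hpL (hdropP i) (hdropL i)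
            rwa [show i + (n - i) = n by omega] at hc
          rw [List.map_congr_left hpt]
          by_cases hv : stw (σ.drop i) = List.range' 1 (n - i)
          · have hsum : ((L i).map (fun p =>
                if p.1 = List.range' 1 i ∧ stw (σ.drop i) = List.range' 1 (n - i)
                then -p.2 else 0)).sum
                = -(((L i).map (fun p => if p.1 = List.range' 1 i then p.2 else 0)).sum) := by
              rw [← list_sum_negK, List.map_map]
              congr 1
              refine List.map_congr_left (fun p _ => ?_)
              by_cases hpI : p.1 = List.range' 1 i
              · simp [hpI, hv]
              · simp [hpI]
            rw [hsum]
            have : ((L i).map (fun p => if p.1 = List.range' 1 i then p.2 else 0)).sum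
                = cf (List.range' 1 i) (L i) := rfl
            rw [this, hcfi]
            have hcond : ((σ.take i).Pairwise (· > ·) ∧ (σ.drop i).Pairwise (· < ·)) ↔
                stw (σ.take i) = (List.range' 1 i).reverse := by
              rw [hiffT]
              have := hiffD.1 hv
              tauto
            rw [if_congr hcond.symm rfl rfl]
          · have hsum : ((L i).map (fun p =>
                if p.1 = List.range' 1 i ∧ stw (σ.drop i) = List.range' 1 (n - i)
                then -p.2 else 0)).sum = 0 := by
              rw [List.sum_eq_zero]
              intro x hx
              rw [List.mem_map] at hx
              obtain ⟨p, hp, rfl⟩ := hx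
              rw [if_neg]
              rintro ⟨-, h2⟩
              exact hv h2
            rw [hsum, if_neg, neg_zero]
            rintro ⟨-, h2⟩
            exact hv (hiffD.2 h2)
        rw [Finset.sum_congr rfl hterm, Finset.sum_neg_distrib]
        have hcomb := comb_identity (K := K) σ hnodup hne
        rw [hlen] at hcomb
        rw [hcomb]
        have hiff : σ.Pairwise (· > ·) ↔ σ = (List.range' 1 n).reverse := by
          constructor
          · intro hs
            have := eq_rev_range'_of_sorted hσ hs
            rwa [hlen] at this
          · intro hs
            rw [hs]
            exact sorted_gt_range'_reverse 1 n
        by_cases hs : σ.Pairwise (· > ·)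
        · rw [if_pos hs, if_pos (hiff.1 hs), neg_neg]
        · rw [if_neg hs, if_neg (fun h => hs (hiff.2 h)), neg_zero]

theorem coeff_lin (e : List ℕ → A) (coeff : List ℕ → (A →ₗ[K] K))
    (hcoeff : ∀ v w : List ℕ, IsPermList v → IsPermList w →
      coeff v (e w) = if v = w then (1 : K) else 0)
    (v : List ℕ) (hv : IsPermList v) :
    ∀ l : List (List ℕ × K), (∀ p ∈ l, IsPermList p.1) → coeff v (lin e l) = cf v l := by
  intro l
  induction l with
  | nil => intro _; simp [lin, cf]
  | cons p l ih =>
    intro hl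
    have h1 : lin e (p :: l) = p.2 • e p.1 + lin e l := by simp [lin]
    rw [h1, map_add, map_smul, ih (fun q hq => hl q (List.mem_cons_of_mem p hq)),
      hcoeff v p.1 hv (hl p List.mem_cons_self)]
    have h2 : cf v (p :: l) = (if p.1 = v then p.2 else 0) + cf v l := by simp [cf]
    rw [h2]
    congr 1
    by_cases hpv : p.1 = v
    · simp [hpv]
    · simp [hpv, Ne.symm hpv]

end Main

end SSymAux

/-- in the Malvenuto–Reutenauer Hopf algebra `SSym`, the
coefficient of the identity permutation `12⋯n` in `S(σ)`, for `σ ∈ S_n`, is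
`(-1)^n` if `σ = n(n-1)⋯1` and `0` otherwise. -/
theorem ssym_coeff_identity_antipode (K : Type) [Field K] (A : Type) [Ring A]
    [HopfAlgebra K A] (e : List ℕ → A)
    (coeff : List ℕ → (A →ₗ[K] K))
    (hcoeff : ∀ v w : List ℕ, IsPermList v → IsPermList w →
      coeff v (e w) = if v = w then (1 : K) else 0)
    (hone : e [] = 1)
    (hmul : ∀ v w : List ℕ, IsPermList v → IsPermList w →
      e v * e w = ((shuffles v (w.map (· + v.length))).map e).sum)
    (hcomul : ∀ w : List ℕ, IsPermList w →
      Coalgebra.comul (R := K) (e w) =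
        ∑ i ∈ Finset.range (w.length + 1),
          e (stw (w.take i)) ⊗ₜ[K] e (stw (w.drop i)))
    (hcounit : ∀ w : List ℕ, IsPermList w →
      Coalgebra.counit (R := K) (e w) = if w = [] then (1 : K) else 0)
    (σ : List ℕ) (hσ : IsPermList σ) :
    coeff (List.range' 1 σ.length) (HopfAlgebra.antipode (R := K) (e σ)) =
      if σ = (List.range' 1 σ.length).reverse then ((-1 : K) ^ σ.length)
      else 0 := by
  obtain ⟨l, hwf, hrep, hcf⟩ :=
    SSymAux.antipode_repr e hone hmul hcomul hcounit σ.length σ rfl hσ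
  have hv : IsPermList (List.range' 1 σ.length) := by
    rw [IsPermList, List.length_range']
  rw [hrep, SSymAux.coeff_lin e coeff hcoeff _ hv l (fun p hp => (hwf p hp).1), hcf]
end
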